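/- Let ξ be a nonnegative random variable and h : [0,∞) → [0,∞) a nondecreasing eventually concave function with h(x) = o(x) as x → ∞ and h(x) ≥ log x for all sufficiently large x. If E[exp(h(ξ))] < ∞, then for every c > E[ξ] there exists a constant K(c) such that for all n, E[exp(h(S_n))] ≤ K(c)·exp(h(n·c)), where S_n is the sum of n IID copies of ξ. -/

import Mathlib

open MeasureTheory ProbabilityTheory Real Filter Asymptotics Topology
open scoped ENNReal

section SlopeAux

variable {h : ℝ → ℝ} {a : ℝ}

lemma dfk_slope_right (hconc : ConcaveOn ℝ (Set.Ici a) h)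
    {p q q' : ℝ} (hap : a ≤ p) (hpq : p < q) (hqq' : q ≤ q') :
    (h q' - h p) / (q' - p) ≤ (h q - h p) / (q - p) := by
  rcases eq_or_lt_of_le hqq' with rfl | hlt
  · exact le_refl _
  · have hadj := hconc.slope_anti_adjacent (x := p) (y := q) (z := q')
      (Set.mem_Ici.2 hap) (Set.mem_Ici.2 (hap.trans (hpq.trans hlt).le)) hpq hlt
    have h1 : (0:ℝ) < q - p := by linarith
    have h2 : (0:ℝ) < q' - p := by linarith
    have h3 : (0:ℝ) < q' - q := by linarith
    rw [div_le_div_iff₀ h2 h1]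
    rw [div_le_div_iff₀ h3 h1] at hadj
    nlinarith [hadj]

lemma dfk_slope_left (hconc : ConcaveOn ℝ (Set.Ici a) h)
    {p p' q : ℝ} (hap : a ≤ p) (hpp' : p ≤ p') (hp'q : p' < q) :
    (h q - h p') / (q - p') ≤ (h q - h p) / (q - p) := by
  rcases eq_or_lt_of_le hpp' with rfl | hlt
  · exact le_refl _
  · have hadj := hconc.slope_anti_adjacent (x := p) (y := p') (z := q)
      (Set.mem_Ici.2 hap) (Set.mem_Ici.2 (hap.trans (hlt.trans hp'q).le)) hlt hp'q
    have h1 : (0:ℝ) < q - p := by linarith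
    have h2 : (0:ℝ) < q - p' := by linarith
    have h3 : (0:ℝ) < p' - p := by linarith
    rw [div_le_div_iff₀ h2 h1]
    rw [div_le_div_iff₀ h2 h3] at hadj
    nlinarith [hadj]

lemma dfk_slope_pair (hconc : ConcaveOn ℝ (Set.Ici a) h)
    {p q p' q' : ℝ} (hap : a ≤ p) (hpq : p < q) (hpp' : p ≤ p') (hqq' : q ≤ q')
    (hp'q' : p' < q') :
    (h q' - h p') / (q' - p') ≤ (h q - h p) / (q - p) :=
  (dfk_slope_left hconc hap hpp' hp'q').trans (dfk_slope_right hconc hap hpq hqq')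

end SlopeAux

section GammaAux

variable {h : ℝ → ℝ} {a : ℝ}

lemma dfk_gamma_nonneg (hmono : Monotone h) (t : ℝ) : 0 ≤ h t - h (t-1) :=
  sub_nonneg.2 (hmono (by linarith))

lemma dfk_gamma_anti (hconc : ConcaveOn ℝ (Set.Ici a) h) {t t' : ℝ}
    (hat : a + 1 ≤ t) (htt' : t ≤ t') :
    h t' - h (t'-1) ≤ h t - h (t-1) := by
  have hp := dfk_slope_pair hconc (p := t-1) (q := t) (p' := t'-1) (q' := t')
    (by linarith) (by linarith) (by linarith) htt' (by linarith)
  have e1 : t - (t-1) = 1 := by ring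
  have e2 : t' - (t'-1) = 1 := by ring
  rwa [e1, e2, div_one, div_one] at hp

lemma dfk_gamma_le_Gamma (hconc : ConcaveOn ℝ (Set.Ici a) h) {t : ℝ}
    (ht : a + 2 ≤ t) : h t - h (t-1) ≤ h (a+2) - h (a+1) := by
  have := dfk_gamma_anti hconc (t := a+2) (t' := t) (by linarith) ht
  have e : a + 2 - 1 = a + 1 := by ring
  rwa [e] at this

lemma dfk_line (hmono : Monotone h) (hconc : ConcaveOn ℝ (Set.Ici a) h) (ha : 0 ≤ a)
    {t x : ℝ} (ht : a + 2 ≤ t) (hx : 0 ≤ x) :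
    h x ≤ h t + (h t - h (t-1)) * (x - t) + (h (a+2) - h (a+1)) * (1 + a) := by
  have hγ0 : 0 ≤ h t - h (t-1) := dfk_gamma_nonneg hmono t
  have hγΓ : h t - h (t-1) ≤ h (a+2) - h (a+1) := dfk_gamma_le_Gamma hconc ht
  have hΓ0 : (0:ℝ) ≤ h (a+2) - h (a+1) := le_trans hγ0 hγΓ
  rcases le_or_gt t x with hxt | htx
  · rcases eq_or_lt_of_le hxt with rfl | hlt
    · nlinarith
    · have hs := dfk_slope_pair hconc (p := t-1) (q := t) (p' := t) (q' := x)
        (by linarith) (by linarith) (by linarith) hlt.le hlt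
      rw [show t - (t-1) = 1 by ring, div_one] at hs
      rw [div_le_iff₀ (by linarith : (0:ℝ) < x - t)] at hs
      nlinarith
  · rcases le_or_gt x (t-1) with hxle | hxgt
    · rcases le_or_gt a x with hax | hxa
      · have hs := dfk_slope_pair hconc (p := x) (q := t) (p' := t-1) (q' := t)
          hax (by linarith) hxle le_rfl (by linarith)
        rw [show t - (t-1) = 1 by ring, div_one] at hs
        rw [le_div_iff₀ (by linarith : (0:ℝ) < t - x)] at hs
        nlinarith
      · have hs := dfk_slope_pair hconc (p := a) (q := t) (p' := t-1) (q' := t)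
          le_rfl (by linarith) (by linarith) le_rfl (by linarith)
        rw [show t - (t-1) = 1 by ring, div_one] at hs
        rw [le_div_iff₀ (by linarith : (0:ℝ) < t - a)] at hs
        have hxa' : h x ≤ h a := hmono hxa.le
        nlinarith [mul_le_mul hγΓ (by linarith : a - x ≤ a) (by linarith) hΓ0]
    · have hxt' : h x ≤ h t := hmono htx.le
      nlinarith

lemma dfk_medium (hmono : Monotone h) (hconc : ConcaveOn ℝ (Set.Ici a) h)
    {t s x : ℝ} (ht : a + 2 ≤ t) (hs : a ≤ s) (hsx : s < x) (hxt : x ≤ t) :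
    (h t - h (t-1)) * x ≤ h x - h s + (h t - h (t-1)) * s + (h (a+2) - h (a+1)) := by
  have hγ0 : 0 ≤ h t - h (t-1) := dfk_gamma_nonneg hmono t
  have hγΓ : h t - h (t-1) ≤ h (a+2) - h (a+1) := dfk_gamma_le_Gamma hconc ht
  rcases le_or_gt s (t-1) with hsle | hsgt
  · have hp := dfk_slope_pair hconc (p := s) (q := x) (p' := t-1) (q' := t)
      hs hsx hsle hxt (by linarith)
    rw [show t - (t-1) = 1 by ring, div_one] at hp
    rw [le_div_iff₀ (by linarith : (0:ℝ) < x - s)] at hp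
    nlinarith
  · have hhx : h s ≤ h x := hmono hsx.le
    have hxs1 : x - s ≤ 1 := by linarith
    nlinarith

lemma dfk_gamma_mul_self (hmono : Monotone h) (hconc : ConcaveOn ℝ (Set.Ici a) h)
    (ha : 0 ≤ a) {t : ℝ} (ht : a + 2 ≤ t) :
    (h t - h (t-1)) * t ≤ h t - h a + (h (a+2) - h (a+1)) * a := by
  have hγ0 : 0 ≤ h t - h (t-1) := dfk_gamma_nonneg hmono t
  have hγΓ : h t - h (t-1) ≤ h (a+2) - h (a+1) := dfk_gamma_le_Gamma hconc ht
  have hp := dfk_slope_pair hconc (p := a) (q := t) (p' := t-1) (q' := t)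
    le_rfl (by linarith) (by linarith) le_rfl (by linarith)
  rw [show t - (t-1) = 1 by ring, div_one] at hp
  rw [le_div_iff₀ (by linarith : (0:ℝ) < t - a)] at hp
  nlinarith [mul_le_mul hγΓ (le_refl a) ha (le_trans hγ0 hγΓ)]

end GammaAux

section MoreAux

variable {h : ℝ → ℝ} {a : ℝ}

lemma dfk_subadd_aux (hmono : Monotone h) (hconc : ConcaveOn ℝ (Set.Ici a) h)
    (ha : 0 ≤ a) {u v : ℝ} (hu : 0 ≤ u) (hv : 0 ≤ v) (hvu : v ≤ u) :
    h (u+v) ≤ h u + h v + (max (h (2*a+4) - 2*h 0)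
      ((h (a+2) - h (a+1))*(1+a) +
        max ((h (a+2) - h (a+1))*(a+2) - h 0) ((h (a+2) - h (a+1))*a - h a))) := by
  set Γ := h (a+2) - h (a+1) with hΓdef
  have hΓ0 : 0 ≤ Γ := dfk_gamma_nonneg hmono (a+2) |>.trans (le_of_eq (by rw [show a+2-1 = a+1 by ring]))
  rcases lt_or_ge u (a+2) with hua | hua
  · have h1 : h (u+v) ≤ h (2*a+4) := hmono (by linarith)
    have h2 : h 0 ≤ h u := hmono hu
    have h3 : h 0 ≤ h v := hmono hv
    have := le_max_left (h (2*a+4) - 2*h 0)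
      (Γ*(1+a) + max (Γ*(a+2) - h 0) (Γ*a - h a))
    linarith
  · have hline := dfk_line hmono hconc ha (t := u) (x := u+v) hua (by linarith)
    have hsimp : u + v - u = v := by ring
    rw [hsimp, ← hΓdef] at hline
    have hγΓ : h u - h (u-1) ≤ Γ := dfk_gamma_le_Gamma hconc hua
    have hγ0 : 0 ≤ h u - h (u-1) := dfk_gamma_nonneg hmono u
    have hmaxR := le_max_right (h (2*a+4) - 2*h 0)
      (Γ*(1+a) + max (Γ*(a+2) - h 0) (Γ*a - h a))
    rcases lt_or_ge v (a+2) with hva | hva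
    · have hb : (h u - h (u-1)) * v ≤ Γ * (a+2) :=
        mul_le_mul hγΓ (by linarith) hv hΓ0
      have h3 : h 0 ≤ h v := hmono hv
      have := le_max_left (Γ*(a+2) - h 0) (Γ*a - h a)
      linarith
    · have hgv : h u - h (u-1) ≤ h v - h (v-1) := dfk_gamma_anti hconc (by linarith) hvu
      have hb : (h u - h (u-1)) * v ≤ (h v - h (v-1)) * v :=
        mul_le_mul_of_nonneg_right hgv hv
      have hb2 : (h v - h (v-1)) * v ≤ h v - h a + Γ * a :=
        dfk_gamma_mul_self hmono hconc ha hva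
      have := le_max_right (Γ*(a+2) - h 0) (Γ*a - h a)
      linarith

lemma dfk_subadd (hmono : Monotone h) (hconc : ConcaveOn ℝ (Set.Ici a) h)
    (ha : 0 ≤ a) {u v : ℝ} (hu : 0 ≤ u) (hv : 0 ≤ v) :
    h (u+v) ≤ h u + h v + (max (h (2*a+4) - 2*h 0)
      ((h (a+2) - h (a+1))*(1+a) +
        max ((h (a+2) - h (a+1))*(a+2) - h 0) ((h (a+2) - h (a+1))*a - h a))) := by
  rcases le_total v u with hvu | huv
  · exact dfk_subadd_aux hmono hconc ha hu hv hvu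
  · have := dfk_subadd_aux hmono hconc ha hv hu huv
    rw [show v + u = u + v by ring] at this
    linarith

lemma dfk_gamma_tendsto (hmono : Monotone h) (hconc : ConcaveOn ℝ (Set.Ici a) h)
    (hlittle : h =o[atTop] (fun x : ℝ => x)) :
    Tendsto (fun t : ℝ => h t - h (t-1)) atTop (𝓝 0) := by
  have hO : (fun t : ℝ => t) =O[atTop] (fun t : ℝ => t - a) := by
    apply Asymptotics.IsBigO.of_bound 2
    filter_upwards [eventually_ge_atTop (2*|a| + 2)] with t ht
    have h1 : |a| ≥ a := le_abs_self a
    have h2 : |a| ≥ -a := neg_le_abs a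
    rw [Real.norm_eq_abs, Real.norm_eq_abs,
      abs_of_nonneg (by linarith : (0:ℝ) ≤ t), abs_of_nonneg (by linarith : (0:ℝ) ≤ t - a)]
    linarith
  have h1 : (fun t : ℝ => h t - h a) =o[atTop] (fun t : ℝ => t - a) := by
    have := (hlittle.sub (Asymptotics.isLittleO_const_id_atTop (h a))).trans_isBigO hO
    simpa using this
  have h2 : Tendsto (fun t : ℝ => (h t - h a)/(t - a)) atTop (𝓝 0) :=
    h1.tendsto_div_nhds_zero
  apply tendsto_of_tendsto_of_tendsto_of_le_of_le' tendsto_const_nhds h2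
  · exact Eventually.of_forall (fun t => dfk_gamma_nonneg hmono t)
  · filter_upwards [eventually_ge_atTop (a+2)] with t ht
    have hp := dfk_slope_pair hconc (p := a) (q := t) (p' := t-1) (q' := t)
      le_rfl (by linarith) (by linarith) le_rfl (by linarith)
    rwa [show t - (t-1) = 1 by ring, div_one] at hp

end MoreAux

section ProbAux

open scoped ENNReal

lemma dfk_lintegral_ident {Ω : Type*} [MeasurableSpace Ω] {μ : Measure Ω} {X Y : Ω → ℝ}
    (hX : Measurable X) (hY : Measurable Y) (hid : IdentDistrib X Y μ μ)
    (g : ℝ → ℝ≥0∞) (hg : Measurable g) :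
    ∫⁻ ω, g (X ω) ∂μ = ∫⁻ ω, g (Y ω) ∂μ := by
  rw [← lintegral_map hg hX, ← lintegral_map hg hY, hid.map_eq]

lemma dfk_lintegral_prod {Ω : Type*} [MeasurableSpace Ω] (μ : Measure Ω) [IsProbabilityMeasure μ]
    (ξ : ℕ → Ω → ℝ) (hmeas : ∀ i, Measurable (ξ i))
    (hindep : iIndepFun ξ μ)
    (G : ℕ → ℝ → ℝ≥0∞) (hG : ∀ i, Measurable (G i)) (s : Finset ℕ) :
    ∫⁻ ω, ∏ i ∈ s, G i (ξ i ω) ∂μ = ∏ i ∈ s, ∫⁻ ω, G i (ξ i ω) ∂μ := by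
  classical
  induction s using Finset.induction_on with
  | empty => simp
  | @insert a s' ha ih =>
    have hF : ∀ i, Measurable ((G i) ∘ (ξ i)) := fun i => (hG i).comp (hmeas i)
    have hcomp : iIndepFun (fun i => (G i) ∘ (ξ i)) μ :=
      hindep.comp _ hG
    have hip : IndepFun ((G a) ∘ (ξ a)) (∏ j ∈ s', (G j) ∘ (ξ j)) μ :=
      (hcomp.indepFun_finsetProd_of_notMem hF ha).symm
    have hmeasprod : Measurable (∏ j ∈ s', (G j) ∘ (ξ j)) := by
      rw [Finset.prod_fn]
      exact Finset.measurable_prod s' (fun i _ => hF i)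
    have key := lintegral_mul_eq_lintegral_mul_lintegral_of_indepFun''
      (μ := μ) (hF a).aemeasurable hmeasprod.aemeasurable hip
    have e1 : ∀ ω, ∏ i ∈ insert a s', G i (ξ i ω)
        = ((G a) ∘ (ξ a)) ω * (∏ j ∈ s', (G j) ∘ (ξ j)) ω := by
      intro ω
      rw [Finset.prod_insert ha, Finset.prod_apply]
      rfl
    have e2 : ∫⁻ ω, (∏ j ∈ s', (G j) ∘ (ξ j)) ω ∂μ = ∏ i ∈ s', ∫⁻ ω, G i (ξ i ω) ∂μ := by
      rw [← ih]
      congr 1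
      ext ω
      rw [Finset.prod_apply]
      rfl
    simp_rw [e1]
    rw [key, e2, Finset.prod_insert ha]
    rfl

end ProbAux

lemma dfk_exp_le {z Lv : ℝ} (h0 : 0 ≤ z) (hzL : z ≤ Lv) :
    Real.exp z ≤ 1 + z * Real.exp Lv := by
  have e1 := Real.add_one_le_exp (-z)
  have e2 : Real.exp z * (-z + 1) ≤ Real.exp z * Real.exp (-z) :=
    mul_le_mul_of_nonneg_left e1 (Real.exp_pos _).le
  rw [← Real.exp_add, add_neg_cancel, Real.exp_zero] at e2
  have e3 : z * Real.exp z ≤ z * Real.exp Lv :=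
    mul_le_mul_of_nonneg_left (Real.exp_le_exp.2 hzL) h0
  nlinarith

set_option maxHeartbeats 2000000 in
/-- Lemma 3 of Denisov et al.: if `ξ ≥ 0`, `h` is nondecreasing, eventually
concave, `h(x) = o(x)`, `h(x) ≥ log x` eventually and `E[exp (h ξ)] < ∞`,
then for any `c > E[ξ]` there is `K(c)` with
`E[exp (h S_n)] ≤ K(c) · exp (h (n c))` for all `n`. -/
theorem denisov_exp_scale_bound
    {Ω : Type*} [MeasurableSpace Ω] (μ : Measure Ω) [IsProbabilityMeasure μ]
    (ξ : ℕ → Ω → ℝ) (hmeas : ∀ i, Measurable (ξ i))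
    (hindep : iIndepFun ξ μ)
    (hident : ∀ i, IdentDistrib (ξ i) (ξ 0) μ μ)
    (hnonneg : ∀ i ω, 0 ≤ ξ i ω)
    (hint : Integrable (ξ 0) μ)
    (h : ℝ → ℝ) (hmono : Monotone h)
    (hconc : ∃ x₀ : ℝ, ConcaveOn ℝ (Set.Ici x₀) h)
    (hlittle : h =o[atTop] (fun x : ℝ => x))
    (hlog : ∀ᶠ x : ℝ in atTop, Real.log x ≤ h x)
    (hexp : Integrable (fun ω => Real.exp (h (ξ 0 ω))) μ) :
    ∀ c : ℝ, (∫ ω, ξ 0 ω ∂μ) < c →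
      ∃ K : ℝ, ∀ n : ℕ,
        ∫⁻ ω, ENNReal.ofReal (Real.exp (h (∑ i ∈ Finset.range n, ξ i ω))) ∂μ
          ≤ ENNReal.ofReal (K * Real.exp (h (n * c))) := by
  intro c hc
  classical
  obtain ⟨x₀, hconc₀⟩ := hconc
  set a := max x₀ 0 with hadef
  have ha : (0:ℝ) ≤ a := le_max_right _ _
  have hconcA : ConcaveOn ℝ (Set.Ici a) h :=
    hconc₀.subset (Set.Ici_subset_Ici.2 (le_max_left _ _)) (convex_Ici a)
  have hhmeas : Measurable h := hmono.measurable
  set m := ∫ ω, ξ 0 ω ∂μ with hmdef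
  have hm0 : 0 ≤ m := integral_nonneg (fun ω => hnonneg 0 ω)
  have hmc : m < c := hc
  have hc0 : 0 < c := lt_of_le_of_lt hm0 hmc
  set c1 := m + (c-m)/4 with hc1def
  set c2 := m + (c-m)/2 with hc2def
  set c3 := (c-m)/2 with hc3def
  have hc10 : 0 < c1 := by simp only [hc1def]; linarith
  have hc12 : c1 < c2 := by simp only [hc1def, hc2def]; linarith
  have hc2c : c2 < c := by simp only [hc2def]; linarith
  have hc30 : 0 < c3 := by simp only [hc3def]; linarith
  have hc2c3 : c2 + c3 = c := by simp only [hc2def, hc3def]; ring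
  have hmc1 : m < c1 := by simp only [hc1def]; linarith
  set mM := max m (c1/2) with hmMdef
  have hmM0 : 0 < mM := lt_of_lt_of_le (by linarith) (le_max_right _ _)
  have hmMlt : mM < c1 := max_lt hmc1 (by linarith)
  have hmMm : m ≤ mM := le_max_left _ _
  set L := Real.log (c1 / mM) with hLdef
  have hL0 : 0 < L := Real.log_pos ((one_lt_div hmM0).2 hmMlt)
  have hexpLm : Real.exp L * m ≤ c1 := by
    rw [hLdef, Real.exp_log (div_pos hc10 hmM0)]
    calc c1 / mM * m ≤ c1 / mM * mM := by
          exact mul_le_mul_of_nonneg_left hmMm (le_of_lt (div_pos hc10 hmM0))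
      _ = c1 := by field_simp
  set Γ := h (a+2) - h (a+1) with hΓdef
  have hΓ0 : 0 ≤ Γ := sub_nonneg.2 (hmono (by linarith))
  set D := Γ * (1+a) with hDdef
  have hD0 : 0 ≤ D := mul_nonneg hΓ0 (by linarith)
  set C6 := max (h (2*a+4) - 2*h 0) (Γ*(1+a) + max (Γ*(a+2) - h 0) (Γ*a - h a)) with hC6def
  set εG := (c2 - c1) * L * Real.exp (-(L + Γ)) with hεGdef
  have hεG0 : 0 < εG := by
    apply mul_pos (mul_pos (by linarith) hL0) (Real.exp_pos _)
  -- integral quantities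
  have hexp_nn : ∀ ω, 0 ≤ Real.exp (h (ξ 0 ω)) := fun ω => (Real.exp_pos _).le
  set Er := ∫ ω, Real.exp (h (ξ 0 ω)) ∂μ with hErdef
  have hEr0 : 0 ≤ Er := integral_nonneg hexp_nn
  have hE : ∫⁻ ω, ENNReal.ofReal (Real.exp (h (ξ 0 ω))) ∂μ = ENNReal.ofReal Er :=
    (MeasureTheory.ofReal_integral_eq_lintegral_ofReal hexp
      (Filter.Eventually.of_forall hexp_nn)).symm
  have hmean : ∫⁻ ω, ENNReal.ofReal (ξ 0 ω) ∂μ = ENNReal.ofReal m :=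
    (MeasureTheory.ofReal_integral_eq_lintegral_ofReal hint
      (Filter.Eventually.of_forall (hnonneg 0))).symm
  -- the tail function
  set G : ℝ → ℝ≥0∞ :=
    fun t => ∫⁻ ω, ENNReal.ofReal (if t < ξ 0 ω then Real.exp (h (ξ 0 ω)) else 0) ∂μ
    with hGdef
  have hGanti : Antitone G := by
    intro t t' htt'
    apply lintegral_mono
    intro ω
    apply ENNReal.ofReal_le_ofReal
    by_cases hx : t' < ξ 0 ω
    · rw [if_pos hx, if_pos (lt_of_le_of_lt htt' hx)]
    · rw [if_neg hx]
      split
      · exact (Real.exp_pos _).le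
      · exact le_refl _
  have hGle : ∀ t, G t ≤ ENNReal.ofReal Er := by
    intro t
    rw [← hE]
    apply lintegral_mono
    intro ω
    apply ENNReal.ofReal_le_ofReal
    split
    · exact le_refl _
    · exact (Real.exp_pos _).le
  have hGtend : Tendsto (fun k : ℕ => G (k : ℝ)) atTop (𝓝 0) := by
    have hzero : (0:ℝ≥0∞) = ∫⁻ ω, (fun _ : Ω => (0:ℝ≥0∞)) ω ∂μ := by simp
    rw [hGdef, hzero]
    apply tendsto_lintegral_of_dominated_convergence
      (bound := fun ω => ENNReal.ofReal (Real.exp (h (ξ 0 ω))))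
    · intro k
      apply ENNReal.measurable_ofReal.comp
      exact Measurable.ite (measurableSet_lt measurable_const (hmeas 0))
        (Real.measurable_exp.comp (hhmeas.comp (hmeas 0))) measurable_const
    · intro k
      apply Filter.Eventually.of_forall
      intro ω
      apply ENNReal.ofReal_le_ofReal
      split
      · exact le_refl _
      · exact (Real.exp_pos _).le
    · rw [hE]; exact ENNReal.ofReal_ne_top
    · apply Filter.Eventually.of_forall
      intro ω
      obtain ⟨Kn, hKn⟩ := exists_nat_ge (ξ 0 ω)
      apply Tendsto.congr' _ tendsto_const_nhds
      apply Filter.eventually_atTop.2 ⟨Kn, fun k hk => ?_⟩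
      have hkk : ¬ ((k:ℝ) < ξ 0 ω) := not_lt.2 (hKn.trans (by exact_mod_cast hk))
      simp [hkk]
  obtain ⟨t₀, ht₀⟩ : ∃ t₀ : ℕ, G (t₀ : ℝ) ≤ ENNReal.ofReal εG := by
    have hmem : Set.Iio (ENNReal.ofReal εG) ∈ 𝓝 (0:ℝ≥0∞) :=
      Iio_mem_nhds (by simpa using ENNReal.ofReal_pos.2 hεG0)
    obtain ⟨K, hK⟩ := (hGtend.eventually hmem).exists
    exact ⟨K, le_of_lt hK⟩
  obtain ⟨x₁, hx₁⟩ := Filter.eventually_atTop.mp hlog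
  -- gamma along n*c tends to 0
  have hγc : Tendsto (fun n : ℕ => h ((n:ℝ)*c) - h ((n:ℝ)*c - 1)) atTop (𝓝 0) := by
    have h1 := dfk_gamma_tendsto hmono hconcA hlittle
    have h2 : Tendsto (fun n : ℕ => (n:ℝ)*c) atTop atTop :=
      Tendsto.atTop_mul_const hc0 tendsto_natCast_atTop_atTop
    exact h1.comp h2
  set T₀ := max (max x₁ (a+2)) (max 1 ((t₀:ℝ)+1)) with hT₀def
  have hT₀pos : 0 < T₀ := lt_of_lt_of_le one_pos ((le_max_left 1 _).trans (le_max_right _ _))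
  -- collect eventual conditions
  have hev : ∀ᶠ n : ℕ in atTop,
      (a + 2 ≤ (n:ℝ)*c ∧ max (max x₁ a) 1 ≤ c3*(n:ℝ) ∧ 1 ≤ c2*(n:ℝ)) ∧
      (h ((n:ℝ)*c) - h ((n:ℝ)*c - 1) < L / T₀) ∧ 1 ≤ n := by
    have htnc : Tendsto (fun n : ℕ => (n:ℝ)*c) atTop atTop :=
      (tendsto_mul_const_atTop_of_pos hc0).2 tendsto_natCast_atTop_atTop
    have hc20 : (0:ℝ) < c2 := by simp only [hc2def]; linarith
    have e1 : ∀ᶠ n : ℕ in atTop, a + 2 ≤ (n:ℝ)*c := htnc.eventually_ge_atTop _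
    have e2 : ∀ᶠ n : ℕ in atTop, max (max x₁ a) 1 ≤ c3*(n:ℝ) :=
      (((tendsto_const_mul_atTop_of_pos hc30).2 tendsto_natCast_atTop_atTop).eventually_ge_atTop _)
    have e3 : ∀ᶠ n : ℕ in atTop, 1 ≤ c2*(n:ℝ) :=
      (((tendsto_const_mul_atTop_of_pos hc20).2 tendsto_natCast_atTop_atTop).eventually_ge_atTop _)
    have e4 : ∀ᶠ n : ℕ in atTop, h ((n:ℝ)*c) - h ((n:ℝ)*c - 1) < L / T₀ :=
      hγc.eventually (Iio_mem_nhds (div_pos hL0 hT₀pos))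
    have e5 : ∀ᶠ n : ℕ in atTop, 1 ≤ n := eventually_ge_atTop 1
    filter_upwards [e1, e2, e3, e4, e5] with n h1 h2 h3 h4 h5
    exact ⟨⟨h1, h2, h3⟩, h4, h5⟩
  obtain ⟨N₀, hN₀⟩ := Filter.eventually_atTop.mp hev
  set Ksmall := ∑ j ∈ Finset.range N₀,
    Real.exp (h 0 + (j:ℝ)*C6) * Er^j * Real.exp (-(h ((j:ℝ)*c))) with hKsmalldef
  have hKsmall0 : 0 ≤ Ksmall := Finset.sum_nonneg (fun j _ => by positivity)
  set K := Ksmall + Real.exp D * (1 + Er / c3) + Real.exp D with hKdef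
  refine ⟨K, ?_⟩
  intro n
  rcases lt_or_ge n N₀ with hnN | hnN
  · -- small n case
    have hpt : ∀ (k : ℕ) (ω : Ω), h (∑ i ∈ Finset.range k, ξ i ω)
        ≤ h 0 + ∑ i ∈ Finset.range k, (h (ξ i ω) + C6) := by
      intro k ω
      induction k with
      | zero => simp
      | succ k ih =>
        rw [Finset.sum_range_succ, Finset.sum_range_succ]
        have hS0 : 0 ≤ ∑ i ∈ Finset.range k, ξ i ω :=
          Finset.sum_nonneg (fun i _ => hnonneg i ω)
        have hsa := dfk_subadd hmono hconcA ha hS0 (hnonneg k ω)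
        rw [← hΓdef, ← hC6def] at hsa
        linarith
    have hmexp : Measurable (fun x : ℝ => ENNReal.ofReal (Real.exp (h x))) :=
      ENNReal.measurable_ofReal.comp (Real.measurable_exp.comp hhmeas)
    calc ∫⁻ ω, ENNReal.ofReal (Real.exp (h (∑ i ∈ Finset.range n, ξ i ω))) ∂μ
        ≤ ∫⁻ ω, ENNReal.ofReal (Real.exp (h 0 + (n:ℝ)*C6))
            * ∏ i ∈ Finset.range n, ENNReal.ofReal (Real.exp (h (ξ i ω))) ∂μ := by
          apply lintegral_mono
          intro ω
          have h1 := hpt n ω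
          rw [Finset.sum_add_distrib, Finset.sum_const, Finset.card_range,
            nsmul_eq_mul] at h1
          have h2 : Real.exp (h (∑ i ∈ Finset.range n, ξ i ω))
              ≤ Real.exp (h 0 + (n:ℝ)*C6) * ∏ i ∈ Finset.range n, Real.exp (h (ξ i ω)) := by
            rw [← Real.exp_sum, ← Real.exp_add]
            apply Real.exp_le_exp.2
            linarith
          calc ENNReal.ofReal (Real.exp (h (∑ i ∈ Finset.range n, ξ i ω)))
              ≤ ENNReal.ofReal (Real.exp (h 0 + (n:ℝ)*C6)
                  * ∏ i ∈ Finset.range n, Real.exp (h (ξ i ω))) :=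
                ENNReal.ofReal_le_ofReal h2
            _ = ENNReal.ofReal (Real.exp (h 0 + (n:ℝ)*C6))
                  * ∏ i ∈ Finset.range n, ENNReal.ofReal (Real.exp (h (ξ i ω))) := by
                rw [ENNReal.ofReal_mul (Real.exp_pos _).le,
                  ENNReal.ofReal_prod_of_nonneg (fun i _ => (Real.exp_pos _).le)]
      _ = ENNReal.ofReal (Real.exp (h 0 + (n:ℝ)*C6))
            * ∏ i ∈ Finset.range n, ∫⁻ ω, ENNReal.ofReal (Real.exp (h (ξ i ω))) ∂μ := by
          have hmprod : Measurable
              (fun ω => ∏ i ∈ Finset.range n, ENNReal.ofReal (Real.exp (h (ξ i ω)))) :=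
            Finset.measurable_prod _ (fun i _ => hmexp.comp (hmeas i))
          rw [lintegral_const_mul _ hmprod,
            dfk_lintegral_prod μ ξ hmeas hindep (fun _ x => ENNReal.ofReal (Real.exp (h x)))
              (fun i => hmexp) (Finset.range n)]
      _ = ENNReal.ofReal (Real.exp (h 0 + (n:ℝ)*C6)) * (ENNReal.ofReal Er)^n := by
          rw [Finset.prod_congr rfl (fun i _ =>
            dfk_lintegral_ident (hmeas i) (hmeas 0) (hident i)
              (fun x => ENNReal.ofReal (Real.exp (h x))) hmexp), Finset.prod_const,
            Finset.card_range, hE]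
      _ ≤ ENNReal.ofReal (K * Real.exp (h ((n:ℝ) * c))) := by
          rw [← ENNReal.ofReal_pow hEr0, ← ENNReal.ofReal_mul (Real.exp_pos _).le]
          apply ENNReal.ofReal_le_ofReal
          have hterm : Real.exp (h 0 + (n:ℝ)*C6) * Er^n * Real.exp (-(h ((n:ℝ)*c))) ≤ Ksmall := by
            rw [hKsmalldef]
            exact Finset.single_le_sum (f := fun j : ℕ =>
              Real.exp (h 0 + (j:ℝ)*C6) * Er^j * Real.exp (-(h ((j:ℝ)*c))))
              (fun j _ => by positivity) (Finset.mem_range.2 hnN)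
          have hKK : Ksmall ≤ K := by
            rw [hKdef]
            have h1 : 0 ≤ Real.exp D * (1 + Er / c3) := by positivity
            have h2 : 0 ≤ Real.exp D := (Real.exp_pos _).le
            linarith
          have hone : Real.exp (-(h ((n:ℝ)*c))) * Real.exp (h ((n:ℝ)*c)) = 1 := by
            rw [← Real.exp_add]; simp
          have h3 := mul_le_mul_of_nonneg_right (hterm.trans hKK)
            (Real.exp_pos (h ((n:ℝ)*c))).le
          have h4 : Real.exp (h 0 + (n:ℝ)*C6) * Er^n * Real.exp (-(h ((n:ℝ)*c)))
              * Real.exp (h ((n:ℝ)*c)) = Real.exp (h 0 + (n:ℝ)*C6) * Er^n := by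
            rw [mul_assoc, hone, mul_one]
          linarith
  · -- main case
    obtain ⟨⟨hTa2, hc3n, hc2n⟩, hγlt, hn1⟩ := hN₀ n hnN
    have hx₁c3 : x₁ ≤ c3 * (n:ℝ) :=
      le_trans (le_trans (le_max_left x₁ a) (le_max_left _ 1)) hc3n
    have hac3 : a ≤ c3 * (n:ℝ) :=
      le_trans (le_trans (le_max_right x₁ a) (le_max_left _ 1)) hc3n
    have h1c3 : 1 ≤ c3 * (n:ℝ) := le_trans (le_max_right _ 1) hc3n
    have hn0R : (1:ℝ) ≤ (n:ℝ) := by exact_mod_cast hn1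
    have hγ0 : 0 ≤ h ((n:ℝ)*c) - h ((n:ℝ)*c - 1) := dfk_gamma_nonneg hmono _
    have hSnn : ∀ ω, 0 ≤ ∑ i ∈ Finset.range n, ξ i ω :=
      fun ω => Finset.sum_nonneg (fun i _ => hnonneg i ω)
    have hexpDK : Real.exp D ≤ K := by
      rw [hKdef]
      have h1 : 0 ≤ Real.exp D * (1 + Er / c3) := by positivity
      linarith only [h1, hKsmall0]
    rcases eq_or_lt_of_le hγ0 with hγzero | hγpos
    · -- degenerate case: γ = 0, h is bounded above by h(nc) + D
      have hline : ∀ ω, h (∑ i ∈ Finset.range n, ξ i ω) ≤ h ((n:ℝ)*c) + D := by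
        intro ω
        have hl := dfk_line hmono hconcA ha (t := (n:ℝ)*c)
          (x := ∑ i ∈ Finset.range n, ξ i ω) hTa2 (hSnn ω)
        rw [← hΓdef, ← hDdef] at hl
        have hz : (h ((n:ℝ)*c) - h ((n:ℝ)*c - 1))
            * ((∑ i ∈ Finset.range n, ξ i ω) - (n:ℝ)*c) = 0 := by
          rw [← hγzero, zero_mul]
        linarith only [hl, hz]
      calc ∫⁻ ω, ENNReal.ofReal (Real.exp (h (∑ i ∈ Finset.range n, ξ i ω))) ∂μ
          ≤ ∫⁻ _ω, ENNReal.ofReal (Real.exp (h ((n:ℝ)*c) + D)) ∂μ :=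
            lintegral_mono (fun ω => ENNReal.ofReal_le_ofReal (Real.exp_le_exp.2 (hline ω)))
        _ = ENNReal.ofReal (Real.exp (h ((n:ℝ)*c) + D)) := by
            rw [lintegral_const, measure_univ, mul_one]
        _ ≤ ENNReal.ofReal (K * Real.exp (h ((n:ℝ) * c))) := by
            apply ENNReal.ofReal_le_ofReal
            rw [Real.exp_add, mul_comm]
            exact mul_le_mul_of_nonneg_right hexpDK (Real.exp_pos _).le
    · -- main branch: γ > 0
      set γ := h ((n:ℝ)*c) - h ((n:ℝ)*c - 1) with hγdef
      set s := L / γ with hsdef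
      have hγT₀ : γ * T₀ < L := (lt_div_iff₀ hT₀pos).1 hγlt
      have hsT₀ : T₀ ≤ s := by
        rw [hsdef, le_div_iff₀ hγpos]
        calc T₀ * γ = γ * T₀ := mul_comm _ _
          _ ≤ L := hγT₀.le
      have hsx₁ : x₁ ≤ s := le_trans (le_trans (le_max_left _ _) (le_max_left _ _)) hsT₀
      have hsa2 : a + 2 ≤ s := le_trans (le_trans (le_max_right x₁ (a+2)) (le_max_left _ _)) hsT₀
      have hs1 : (1:ℝ) ≤ s := le_trans (le_trans (le_max_left 1 _) (le_max_right _ _)) hsT₀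
      have hst₀ : (t₀:ℝ) ≤ s := by
        have h1 : (t₀:ℝ) ≤ max 1 ((t₀:ℝ)+1) :=
          le_trans (by linarith only []) (le_max_right _ _)
        exact le_trans (le_trans h1 (le_max_right _ _)) hsT₀
      have hs0 : (0:ℝ) < s := lt_of_lt_of_le one_pos hs1
      have hγs : γ * s = L := by
        rw [hsdef]; field_simp
      have hlogs : Real.log s ≤ h s := hx₁ s hsx₁
      have hsinv : Real.exp (-(h s)) ≤ 1/s := by
        have h1 : Real.exp (-(h s)) ≤ Real.exp (-(Real.log s)) :=
          Real.exp_le_exp.2 (neg_le_neg hlogs)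
        have h2 : Real.exp (-(Real.log s)) = 1/s := by
          rw [Real.exp_neg, Real.exp_log hs0, one_div]
        rw [h2] at h1
        exact h1
      set gstar : ℝ → ℝ := fun x =>
        Real.exp (γ * min x s)
          + (if s < x then Real.exp (L + Γ - h s) * Real.exp (h x) else 0) with hgdef
      have hgnn : ∀ x, 0 ≤ gstar x := by
        intro x
        simp only [hgdef]
        apply add_nonneg (Real.exp_pos _).le
        split
        · positivity
        · exact le_refl _
      have hgm : Measurable gstar := by
        rw [hgdef]
        apply Measurable.add
        · exact Real.measurable_exp.comp ((measurable_id.min measurable_const).const_mul γ)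
        · exact Measurable.ite (measurableSet_lt measurable_const measurable_id)
            ((Real.measurable_exp.comp hhmeas).const_mul _) measurable_const
      have hgmE : Measurable (fun x => ENNReal.ofReal (gstar x)) :=
        ENNReal.measurable_ofReal.comp hgm
      -- the pointwise domination lemma
      have hPV : ∀ y, (n:ℝ)*c ≤ y → ∀ x, 0 ≤ x → x ≤ y →
          Real.exp ((h y - h (y-1)) * x) ≤ gstar x := by
        intro y hTy x hx0 hxy
        have hγy0 : 0 ≤ h y - h (y-1) := dfk_gamma_nonneg hmono y
        have hγyγ : h y - h (y-1) ≤ γ := by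
          rw [hγdef]; exact dfk_gamma_anti hconcA (by linarith) hTy
        rcases le_or_gt x s with hxs | hsx
        · have hle : (h y - h (y-1)) * x ≤ γ * min x s := by
            rw [min_eq_left hxs]; exact mul_le_mul_of_nonneg_right hγyγ hx0
          have h2 : Real.exp ((h y - h (y-1)) * x) ≤ Real.exp (γ * min x s) :=
            Real.exp_le_exp.2 hle
          refine le_trans h2 ?_
          simp only [hgdef]
          apply le_add_of_nonneg_right
          split
          · positivity
          · exact le_refl _
        · have hmed := dfk_medium hmono hconcA (t := y) (s := s)
            (by linarith : a + 2 ≤ y) (by linarith : a ≤ s) hsx hxy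
          rw [← hΓdef] at hmed
          have h2 : (h y - h (y-1)) * s ≤ L := by
            rw [← hγs]; exact mul_le_mul_of_nonneg_right hγyγ (by linarith)
          have h3 : (h y - h (y-1)) * x ≤ (L + Γ - h s) + h x := by
            linarith only [hmed, h2]
          have h4 : Real.exp ((h y - h (y-1)) * x)
              ≤ Real.exp (L + Γ - h s) * Real.exp (h x) := by
            rw [← Real.exp_add]; exact Real.exp_le_exp.2 h3
          simp only [hgdef]
          rw [if_pos hsx]
          exact le_trans h4 (le_add_of_nonneg_left (Real.exp_pos _).le)
      -- mean of the small part
      have hmin_meas : Measurable (fun ω => ENNReal.ofReal (min (ξ 0 ω) s)) :=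
        ENNReal.measurable_ofReal.comp ((hmeas 0).min measurable_const)
      have hφsmall : ∫⁻ ω, ENNReal.ofReal (Real.exp (γ * min (ξ 0 ω) s)) ∂μ
          ≤ ENNReal.ofReal (1 + γ * c1) := by
        have hpw : ∀ ω, ENNReal.ofReal (Real.exp (γ * min (ξ 0 ω) s))
            ≤ 1 + ENNReal.ofReal (γ * Real.exp L) * ENNReal.ofReal (min (ξ 0 ω) s) := by
          intro ω
          have hminnn : 0 ≤ min (ξ 0 ω) s := le_min (hnonneg 0 ω) hs0.le
          have hz0 : 0 ≤ γ * min (ξ 0 ω) s := mul_nonneg hγpos.le hminnn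
          have hzL : γ * min (ξ 0 ω) s ≤ L := by
            rw [← hγs]; exact mul_le_mul_of_nonneg_left (min_le_right _ _) hγpos.le
          have e5 : Real.exp (γ * min (ξ 0 ω) s)
              ≤ 1 + (γ * Real.exp L) * min (ξ 0 ω) s := by
            have := dfk_exp_le hz0 hzL
            have hr : (γ * min (ξ 0 ω) s) * Real.exp L
                = (γ * Real.exp L) * min (ξ 0 ω) s := by ring
            linarith only [this, hr]
          calc ENNReal.ofReal (Real.exp (γ * min (ξ 0 ω) s))
              ≤ ENNReal.ofReal (1 + (γ * Real.exp L) * min (ξ 0 ω) s) :=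
                ENNReal.ofReal_le_ofReal e5
            _ = 1 + ENNReal.ofReal (γ * Real.exp L) * ENNReal.ofReal (min (ξ 0 ω) s) := by
                rw [ENNReal.ofReal_add (by norm_num) (mul_nonneg (by positivity) hminnn),
                  ENNReal.ofReal_one, ENNReal.ofReal_mul (by positivity)]
        calc ∫⁻ ω, ENNReal.ofReal (Real.exp (γ * min (ξ 0 ω) s)) ∂μ
            ≤ ∫⁻ ω, (1 + ENNReal.ofReal (γ * Real.exp L) * ENNReal.ofReal (min (ξ 0 ω) s)) ∂μ :=
              lintegral_mono hpw
          _ = 1 + ENNReal.ofReal (γ * Real.exp L) * ∫⁻ ω, ENNReal.ofReal (min (ξ 0 ω) s) ∂μ := by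
              rw [lintegral_add_left measurable_const, lintegral_const_mul _ hmin_meas,
                lintegral_const, measure_univ, mul_one]
          _ ≤ 1 + ENNReal.ofReal (γ * Real.exp L) * ENNReal.ofReal m := by
              gcongr
              rw [← hmean]
              exact lintegral_mono (fun ω => ENNReal.ofReal_le_ofReal (min_le_left _ _))
          _ = ENNReal.ofReal (1 + γ * Real.exp L * m) := by
              rw [← ENNReal.ofReal_mul (by positivity), ← ENNReal.ofReal_one,
                ← ENNReal.ofReal_add (by norm_num) (by positivity)]
          _ ≤ ENNReal.ofReal (1 + γ * c1) := by
              apply ENNReal.ofReal_le_ofReal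
              have h6 : γ * (Real.exp L * m) ≤ γ * c1 :=
                mul_le_mul_of_nonneg_left hexpLm hγpos.le
              have hr : γ * Real.exp L * m = γ * (Real.exp L * m) := by ring
              linarith only [h6, hr]
      -- mean of the medium/large part
      have hGmeas0 : Measurable
          (fun ω => ENNReal.ofReal (if s < ξ 0 ω then Real.exp (h (ξ 0 ω)) else 0)) :=
        ENNReal.measurable_ofReal.comp (Measurable.ite
          (measurableSet_lt measurable_const (hmeas 0))
          (Real.measurable_exp.comp (hhmeas.comp (hmeas 0))) measurable_const)
      have hφmed : ∫⁻ ω, ENNReal.ofReal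
            (if s < ξ 0 ω then Real.exp (L + Γ - h s) * Real.exp (h (ξ 0 ω)) else 0) ∂μ
          ≤ ENNReal.ofReal (γ * (c2 - c1)) := by
        have hpw : ∀ ω, ENNReal.ofReal
              (if s < ξ 0 ω then Real.exp (L + Γ - h s) * Real.exp (h (ξ 0 ω)) else 0)
            = ENNReal.ofReal (Real.exp (L + Γ - h s))
                * ENNReal.ofReal (if s < ξ 0 ω then Real.exp (h (ξ 0 ω)) else 0) := by
          intro ω
          by_cases hx : s < ξ 0 ω
          · rw [if_pos hx, if_pos hx, ENNReal.ofReal_mul (Real.exp_pos _).le]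
          · rw [if_neg hx, if_neg hx]; simp
        simp_rw [hpw]
        rw [lintegral_const_mul _ hGmeas0]
        have hGs : (∫⁻ ω, ENNReal.ofReal (if s < ξ 0 ω then Real.exp (h (ξ 0 ω)) else 0) ∂μ)
            = G s := by rw [hGdef]
        rw [hGs]
        have hGsle : G s ≤ ENNReal.ofReal εG := le_trans (hGanti hst₀) ht₀
        have hcoef : Real.exp (L + Γ - h s) ≤ Real.exp (L + Γ) * (γ / L) := by
          have he : Real.exp (L + Γ - h s) = Real.exp (L + Γ) * Real.exp (-(h s)) := by
            rw [← Real.exp_add]; ring_nf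
          have h1s : 1/s = γ/L := by
            rw [hsdef, one_div_div]
          have h2 := mul_le_mul_of_nonneg_left hsinv (Real.exp_pos (L+Γ)).le
          rw [h1s] at h2
          rw [he]; exact h2
        calc ENNReal.ofReal (Real.exp (L + Γ - h s)) * G s
            ≤ ENNReal.ofReal (Real.exp (L + Γ) * (γ / L)) * ENNReal.ofReal εG :=
              mul_le_mul' (ENNReal.ofReal_le_ofReal hcoef) hGsle
          _ = ENNReal.ofReal (Real.exp (L + Γ) * (γ / L) * εG) :=
              (ENNReal.ofReal_mul (by positivity)).symm
          _ = ENNReal.ofReal (γ * (c2 - c1)) := by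
              congr 1
              rw [hεGdef, Real.exp_neg]
              field_simp
      -- per-variable bound
      have hgfac : ∫⁻ ω, ENNReal.ofReal (gstar (ξ 0 ω)) ∂μ
          ≤ ENNReal.ofReal (Real.exp (γ * c2)) := by
        have hsplit : ∀ ω, ENNReal.ofReal (gstar (ξ 0 ω))
            = ENNReal.ofReal (Real.exp (γ * min (ξ 0 ω) s))
              + ENNReal.ofReal
                  (if s < ξ 0 ω then Real.exp (L + Γ - h s) * Real.exp (h (ξ 0 ω)) else 0) := by
          intro ω
          simp only [hgdef]
          rw [ENNReal.ofReal_add (Real.exp_pos _).le]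
          split
          · positivity
          · exact le_refl _
        simp_rw [hsplit]
        have hm1 : Measurable (fun ω => ENNReal.ofReal (Real.exp (γ * min (ξ 0 ω) s))) := by
          apply ENNReal.measurable_ofReal.comp
          exact Real.measurable_exp.comp (((hmeas 0).min measurable_const).const_mul γ)
        rw [lintegral_add_left hm1]
        calc _ ≤ ENNReal.ofReal (1 + γ * c1) + ENNReal.ofReal (γ * (c2 - c1)) :=
              add_le_add hφsmall hφmed
          _ = ENNReal.ofReal (1 + γ * c1 + γ * (c2 - c1)) :=
              (ENNReal.ofReal_add
                (add_nonneg zero_le_one (mul_nonneg hγpos.le hc10.le))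
                (mul_nonneg hγpos.le (by linarith only [hc12]))).symm
          _ ≤ ENNReal.ofReal (Real.exp (γ * c2)) := by
              apply ENNReal.ofReal_le_ofReal
              have h7 := Real.add_one_le_exp (γ * c2)
              have hr : γ * c1 + γ * (c2 - c1) = γ * c2 := by ring
              linarith only [h7, hr]
      have hgfaci : ∀ i : ℕ, ∫⁻ ω, ENNReal.ofReal (gstar (ξ i ω)) ∂μ
          ≤ ENNReal.ofReal (Real.exp (γ * c2)) := by
        intro i
        rw [dfk_lintegral_ident (hmeas i) (hmeas 0) (hident i)
          (fun x => ENNReal.ofReal (gstar x)) hgmE]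
        exact hgfac
      -- big-jump factor
      have hbig_meas : Measurable
          (fun x : ℝ => ENNReal.ofReal (if (n:ℝ)*c < x then Real.exp (h x) else 0)) :=
        ENNReal.measurable_ofReal.comp (Measurable.ite
          (measurableSet_lt measurable_const measurable_id)
          (Real.measurable_exp.comp hhmeas) measurable_const)
      have hbigi : ∀ i : ℕ, ∫⁻ ω, ENNReal.ofReal
            (if (n:ℝ)*c < ξ i ω then Real.exp (h (ξ i ω)) else 0) ∂μ ≤ ENNReal.ofReal Er := by
        intro i
        rw [dfk_lintegral_ident (hmeas i) (hmeas 0) (hident i)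
          (fun x => ENNReal.ofReal (if (n:ℝ)*c < x then Real.exp (h x) else 0)) hbig_meas]
        have hback : (∫⁻ ω, ENNReal.ofReal
            (if (n:ℝ)*c < ξ 0 ω then Real.exp (h (ξ 0 ω)) else 0) ∂μ) = G ((n:ℝ)*c) := by
          rw [hGdef]
        rw [hback]
        exact hGle _
      -- case-A per-variable factor
      have hGA0 : ∫⁻ ω, ENNReal.ofReal
            (if ξ 0 ω ≤ (n:ℝ)*c then Real.exp (γ * ξ 0 ω) else 0) ∂μ
          ≤ ENNReal.ofReal (Real.exp (γ * c2)) := by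
        refine le_trans (lintegral_mono (fun ω => ?_)) hgfac
        by_cases hx : ξ 0 ω ≤ (n:ℝ)*c
        · rw [if_pos hx]
          apply ENNReal.ofReal_le_ofReal
          have := hPV ((n:ℝ)*c) le_rfl (ξ 0 ω) (hnonneg 0 ω) hx
          rw [← hγdef] at this
          exact this
        · rw [if_neg hx]
          simp only [ENNReal.ofReal_zero]
          exact zero_le
      have hGA_meas : Measurable (fun x : ℝ =>
          ENNReal.ofReal (if x ≤ (n:ℝ)*c then Real.exp (γ * x) else 0)) :=
        ENNReal.measurable_ofReal.comp (Measurable.ite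
          (measurableSet_le measurable_id measurable_const)
          (Real.measurable_exp.comp (measurable_id.const_mul γ)) measurable_const)
      have hGAi : ∀ i : ℕ, ∫⁻ ω, ENNReal.ofReal
            (if ξ i ω ≤ (n:ℝ)*c then Real.exp (γ * ξ i ω) else 0) ∂μ
          ≤ ENNReal.ofReal (Real.exp (γ * c2)) := by
        intro i
        rw [dfk_lintegral_ident (hmeas i) (hmeas 0) (hident i)
          (fun x => ENNReal.ofReal (if x ≤ (n:ℝ)*c then Real.exp (γ * x) else 0)) hGA_meas]
        exact hGA0
      -- pointwise master inequality
      have hmaster : ∀ ω, ENNReal.ofReal (Real.exp (h (∑ i ∈ Finset.range n, ξ i ω)))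
          ≤ ENNReal.ofReal (Real.exp (D + h ((n:ℝ)*c) - γ*((n:ℝ)*c)))
              * ∏ i ∈ Finset.range n,
                  ENNReal.ofReal (if ξ i ω ≤ (n:ℝ)*c then Real.exp (γ * ξ i ω) else 0)
            + ∑ i ∈ Finset.range n, (ENNReal.ofReal (Real.exp D)
                * (ENNReal.ofReal (if (n:ℝ)*c < ξ i ω then Real.exp (h (ξ i ω)) else 0)
                  * ∏ j ∈ (Finset.range n).erase i, ENNReal.ofReal (gstar (ξ j ω)))) := by
        intro ω
        by_cases hA : ∀ i ∈ Finset.range n, ξ i ω ≤ (n:ℝ)*c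
        · refine le_trans ?_ le_self_add
          have hline := dfk_line hmono hconcA ha (t := (n:ℝ)*c)
            (x := ∑ i ∈ Finset.range n, ξ i ω) hTa2 (hSnn ω)
          rw [← hΓdef, ← hDdef, ← hγdef] at hline
          have hprod : (∏ i ∈ Finset.range n,
              ENNReal.ofReal (if ξ i ω ≤ (n:ℝ)*c then Real.exp (γ * ξ i ω) else 0))
              = ENNReal.ofReal (Real.exp (γ * ∑ i ∈ Finset.range n, ξ i ω)) := by
            calc (∏ i ∈ Finset.range n,
                ENNReal.ofReal (if ξ i ω ≤ (n:ℝ)*c then Real.exp (γ * ξ i ω) else 0))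
                = ∏ i ∈ Finset.range n, ENNReal.ofReal (Real.exp (γ * ξ i ω)) :=
                  Finset.prod_congr rfl (fun i hi => by rw [if_pos (hA i hi)])
              _ = ENNReal.ofReal (∏ i ∈ Finset.range n, Real.exp (γ * ξ i ω)) :=
                  (ENNReal.ofReal_prod_of_nonneg (fun i _ => (Real.exp_pos _).le)).symm
              _ = ENNReal.ofReal (Real.exp (∑ i ∈ Finset.range n, γ * ξ i ω)) := by
                  rw [Real.exp_sum]
              _ = ENNReal.ofReal (Real.exp (γ * ∑ i ∈ Finset.range n, ξ i ω)) := by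
                  rw [← Finset.mul_sum]
          rw [hprod, ← ENNReal.ofReal_mul (Real.exp_pos _).le, ← Real.exp_add]
          apply ENNReal.ofReal_le_ofReal
          apply Real.exp_le_exp.2
          have hexpand : γ * ((∑ i ∈ Finset.range n, ξ i ω) - (n:ℝ)*c)
              = γ * (∑ i ∈ Finset.range n, ξ i ω) - γ * ((n:ℝ)*c) := by ring
          linarith only [hline, hexpand]
        · push_neg at hA
          obtain ⟨i₁, hi₁mem, hi₁⟩ := hA
          obtain ⟨i₀, hi₀mem, hmax⟩ := Finset.exists_max_image (Finset.range n)
            (fun i => ξ i ω) ⟨i₁, hi₁mem⟩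
          have hTi₀ : (n:ℝ)*c < ξ i₀ ω := lt_of_lt_of_le hi₁ (hmax i₁ hi₁mem)
          have hsum_erase : ∑ j ∈ (Finset.range n).erase i₀, ξ j ω
              = (∑ i ∈ Finset.range n, ξ i ω) - ξ i₀ ω := by
            have h8 := Finset.add_sum_erase (Finset.range n) (fun j => ξ j ω) hi₀mem
            linarith only [h8]
          have hline := dfk_line hmono hconcA ha (t := ξ i₀ ω)
            (x := ∑ i ∈ Finset.range n, ξ i ω) (by linarith : a + 2 ≤ ξ i₀ ω) (hSnn ω)
          rw [← hΓdef, ← hDdef] at hline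
          have hreal : Real.exp (h (∑ i ∈ Finset.range n, ξ i ω))
              ≤ Real.exp D * (Real.exp (h (ξ i₀ ω))
                * ∏ j ∈ (Finset.range n).erase i₀, gstar (ξ j ω)) := by
            have hstep1 : Real.exp (h (∑ i ∈ Finset.range n, ξ i ω))
                ≤ Real.exp D * (Real.exp (h (ξ i₀ ω))
                  * Real.exp ((h (ξ i₀ ω) - h (ξ i₀ ω - 1))
                      * ∑ j ∈ (Finset.range n).erase i₀, ξ j ω)) := by
              rw [← Real.exp_add, ← Real.exp_add]
              apply Real.exp_le_exp.2
              rw [hsum_erase]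
              linarith only [hline]
            have hstep2 : Real.exp ((h (ξ i₀ ω) - h (ξ i₀ ω - 1))
                  * ∑ j ∈ (Finset.range n).erase i₀, ξ j ω)
                ≤ ∏ j ∈ (Finset.range n).erase i₀, gstar (ξ j ω) := by
              rw [Finset.mul_sum, Real.exp_sum]
              apply Finset.prod_le_prod (fun j _ => (Real.exp_pos _).le)
              intro j hj
              exact hPV (ξ i₀ ω) hTi₀.le (ξ j ω) (hnonneg j ω)
                (hmax j (Finset.mem_of_mem_erase hj))
            calc Real.exp (h (∑ i ∈ Finset.range n, ξ i ω))
                ≤ Real.exp D * (Real.exp (h (ξ i₀ ω))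
                  * Real.exp ((h (ξ i₀ ω) - h (ξ i₀ ω - 1))
                      * ∑ j ∈ (Finset.range n).erase i₀, ξ j ω)) := hstep1
              _ ≤ Real.exp D * (Real.exp (h (ξ i₀ ω))
                  * ∏ j ∈ (Finset.range n).erase i₀, gstar (ξ j ω)) := by
                  apply mul_le_mul_of_nonneg_left _ (Real.exp_pos D).le
                  exact mul_le_mul_of_nonneg_left hstep2 (Real.exp_pos _).le
          have hkey : ENNReal.ofReal (Real.exp (h (∑ i ∈ Finset.range n, ξ i ω)))
              ≤ ENNReal.ofReal (Real.exp D)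
                * (ENNReal.ofReal (if (n:ℝ)*c < ξ i₀ ω then Real.exp (h (ξ i₀ ω)) else 0)
                  * ∏ j ∈ (Finset.range n).erase i₀, ENNReal.ofReal (gstar (ξ j ω))) := by
            rw [if_pos hTi₀]
            calc ENNReal.ofReal (Real.exp (h (∑ i ∈ Finset.range n, ξ i ω)))
                ≤ ENNReal.ofReal (Real.exp D * (Real.exp (h (ξ i₀ ω))
                    * ∏ j ∈ (Finset.range n).erase i₀, gstar (ξ j ω))) :=
                  ENNReal.ofReal_le_ofReal hreal
              _ = ENNReal.ofReal (Real.exp D)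
                    * (ENNReal.ofReal (Real.exp (h (ξ i₀ ω)))
                      * ∏ j ∈ (Finset.range n).erase i₀, ENNReal.ofReal (gstar (ξ j ω))) := by
                  rw [ENNReal.ofReal_mul (Real.exp_pos D).le,
                    ENNReal.ofReal_mul (Real.exp_pos _).le,
                    ENNReal.ofReal_prod_of_nonneg (fun j _ => hgnn _)]
          refine le_trans hkey (le_trans (Finset.single_le_sum
            (f := fun i => ENNReal.ofReal (Real.exp D)
              * (ENNReal.ofReal (if (n:ℝ)*c < ξ i ω then Real.exp (h (ξ i ω)) else 0)
                * ∏ j ∈ (Finset.range n).erase i, ENNReal.ofReal (gstar (ξ j ω))))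
            (fun i _ => zero_le) hi₀mem) le_add_self)
      -- measurability helpers
      have hGAmeasω : ∀ i : ℕ, Measurable (fun ω => ENNReal.ofReal
          (if ξ i ω ≤ (n:ℝ)*c then Real.exp (γ * ξ i ω) else 0)) := by
        intro i
        apply ENNReal.measurable_ofReal.comp
        exact Measurable.ite (measurableSet_le (hmeas i) measurable_const)
          (Real.measurable_exp.comp ((hmeas i).const_mul γ)) measurable_const
      have hGBmeasω : ∀ i : ℕ, Measurable (fun ω => ENNReal.ofReal
          (if (n:ℝ)*c < ξ i ω then Real.exp (h (ξ i ω)) else 0)) := by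
        intro i
        apply ENNReal.measurable_ofReal.comp
        exact Measurable.ite (measurableSet_lt measurable_const (hmeas i))
          (Real.measurable_exp.comp (hhmeas.comp (hmeas i))) measurable_const
      have hGSmeasω : ∀ i : ℕ, Measurable (fun ω => ENNReal.ofReal (gstar (ξ i ω))) :=
        fun i => hgmE.comp (hmeas i)
      -- part A integral
      have hPA : (∫⁻ ω, ENNReal.ofReal (Real.exp (D + h ((n:ℝ)*c) - γ*((n:ℝ)*c)))
            * ∏ i ∈ Finset.range n, ENNReal.ofReal
                (if ξ i ω ≤ (n:ℝ)*c then Real.exp (γ * ξ i ω) else 0) ∂μ)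
          ≤ ENNReal.ofReal (Real.exp D * Real.exp (h ((n:ℝ)*c))) := by
        have hmprod : Measurable (fun ω => ∏ i ∈ Finset.range n, ENNReal.ofReal
            (if ξ i ω ≤ (n:ℝ)*c then Real.exp (γ * ξ i ω) else 0)) :=
          Finset.measurable_prod _ (fun i _ => hGAmeasω i)
        rw [lintegral_const_mul _ hmprod,
          dfk_lintegral_prod μ ξ hmeas hindep
            (fun _ x => ENNReal.ofReal (if x ≤ (n:ℝ)*c then Real.exp (γ * x) else 0))
            (fun _ => hGA_meas) (Finset.range n)]
        have hprodle : (∏ i ∈ Finset.range n, ∫⁻ ω, ENNReal.ofReal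
              (if ξ i ω ≤ (n:ℝ)*c then Real.exp (γ * ξ i ω) else 0) ∂μ)
            ≤ (ENNReal.ofReal (Real.exp (γ * c2)))^n := by
          calc (∏ i ∈ Finset.range n, ∫⁻ ω, ENNReal.ofReal
                (if ξ i ω ≤ (n:ℝ)*c then Real.exp (γ * ξ i ω) else 0) ∂μ)
              ≤ ∏ _i ∈ Finset.range n, ENNReal.ofReal (Real.exp (γ * c2)) :=
                Finset.prod_le_prod' (fun i _ => hGAi i)
            _ = (ENNReal.ofReal (Real.exp (γ * c2)))^n := by
                rw [Finset.prod_const, Finset.card_range]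
        calc ENNReal.ofReal (Real.exp (D + h ((n:ℝ)*c) - γ*((n:ℝ)*c)))
              * ∏ i ∈ Finset.range n, ∫⁻ ω, ENNReal.ofReal
                  (if ξ i ω ≤ (n:ℝ)*c then Real.exp (γ * ξ i ω) else 0) ∂μ
            ≤ ENNReal.ofReal (Real.exp (D + h ((n:ℝ)*c) - γ*((n:ℝ)*c)))
              * (ENNReal.ofReal (Real.exp (γ * c2)))^n := mul_le_mul_right hprodle _
          _ = ENNReal.ofReal (Real.exp (D + h ((n:ℝ)*c) - γ*((n:ℝ)*c))
                * Real.exp ((n:ℝ) * (γ * c2))) := by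
              rw [← ENNReal.ofReal_pow (Real.exp_pos _).le, ← Real.exp_nat_mul,
                ← ENNReal.ofReal_mul (Real.exp_pos _).le]
          _ ≤ ENNReal.ofReal (Real.exp D * Real.exp (h ((n:ℝ)*c))) := by
              apply ENNReal.ofReal_le_ofReal
              rw [← Real.exp_add, ← Real.exp_add]
              apply Real.exp_le_exp.2
              have h9 : γ*(c2*(n:ℝ)) ≤ γ*(c*(n:ℝ)) :=
                mul_le_mul_of_nonneg_left
                  (mul_le_mul_of_nonneg_right hc2c.le (Nat.cast_nonneg n)) hγpos.le
              have hr1 : (n:ℝ) * (γ * c2) = γ*(c2*(n:ℝ)) := by ring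
              have hr2 : γ*((n:ℝ)*c) = γ*(c*(n:ℝ)) := by ring
              linarith only [h9, hr1, hr2]
      -- part B integrals
      have hPBi : ∀ i ∈ Finset.range n, (∫⁻ ω, ENNReal.ofReal (Real.exp D)
            * (ENNReal.ofReal (if (n:ℝ)*c < ξ i ω then Real.exp (h (ξ i ω)) else 0)
              * ∏ j ∈ (Finset.range n).erase i, ENNReal.ofReal (gstar (ξ j ω))) ∂μ)
          ≤ ENNReal.ofReal (Real.exp D) * (ENNReal.ofReal Er
              * (ENNReal.ofReal (Real.exp (γ * c2)))^n) := by
        intro i hi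
        have hmix_meas : ∀ j : ℕ, Measurable (fun x : ℝ =>
            if j = i then ENNReal.ofReal (if (n:ℝ)*c < x then Real.exp (h x) else 0)
            else ENNReal.ofReal (gstar x)) := by
          intro j
          by_cases hj : j = i
          · simpa [hj] using hbig_meas
          · simpa [hj] using hgmE
        have hrw : ∀ ω : Ω, ENNReal.ofReal (Real.exp D)
            * (ENNReal.ofReal (if (n:ℝ)*c < ξ i ω then Real.exp (h (ξ i ω)) else 0)
              * ∏ j ∈ (Finset.range n).erase i, ENNReal.ofReal (gstar (ξ j ω)))
            = ENNReal.ofReal (Real.exp D) * ∏ j ∈ Finset.range n,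
                (if j = i then ENNReal.ofReal (if (n:ℝ)*c < ξ j ω then Real.exp (h (ξ j ω)) else 0)
                  else ENNReal.ofReal (gstar (ξ j ω))) := by
          intro ω
          congr 1
          rw [← Finset.mul_prod_erase (Finset.range n)
            (fun j => if j = i then ENNReal.ofReal
                (if (n:ℝ)*c < ξ j ω then Real.exp (h (ξ j ω)) else 0)
              else ENNReal.ofReal (gstar (ξ j ω))) hi]
          congr 1
          · simp
          · apply Finset.prod_congr rfl
            intro j hj
            simp [Finset.ne_of_mem_erase hj]
        simp_rw [hrw]
        have hmprod2 : Measurable (fun ω => ∏ j ∈ Finset.range n,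
            (if j = i then ENNReal.ofReal (if (n:ℝ)*c < ξ j ω then Real.exp (h (ξ j ω)) else 0)
              else ENNReal.ofReal (gstar (ξ j ω)))) := by
          apply Finset.measurable_prod
          intro j _
          by_cases hj : j = i
          · simpa [hj] using hGBmeasω j
          · simpa [hj] using hGSmeasω j
        rw [lintegral_const_mul _ hmprod2]
        have hfact := dfk_lintegral_prod μ ξ hmeas hindep
          (fun j x => if j = i then ENNReal.ofReal (if (n:ℝ)*c < x then Real.exp (h x) else 0)
            else ENNReal.ofReal (gstar x)) hmix_meas (Finset.range n)
        rw [hfact]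
        apply mul_le_mul_right
        rw [← Finset.mul_prod_erase (Finset.range n)
          (fun j => ∫⁻ ω, (if j = i then ENNReal.ofReal
              (if (n:ℝ)*c < ξ j ω then Real.exp (h (ξ j ω)) else 0)
            else ENNReal.ofReal (gstar (ξ j ω))) ∂μ) hi]
        apply mul_le_mul'
        · simpa using hbigi i
        · have hone_le : (1:ℝ≥0∞) ≤ ENNReal.ofReal (Real.exp (γ * c2)) := by
            rw [← ENNReal.ofReal_one]
            exact ENNReal.ofReal_le_ofReal
              (Real.one_le_exp (mul_nonneg hγpos.le (by linarith only [hc12, hc10])))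
          calc (∏ j ∈ (Finset.range n).erase i, ∫⁻ ω,
                (if j = i then ENNReal.ofReal
                    (if (n:ℝ)*c < ξ j ω then Real.exp (h (ξ j ω)) else 0)
                  else ENNReal.ofReal (gstar (ξ j ω))) ∂μ)
              ≤ ∏ _j ∈ (Finset.range n).erase i, ENNReal.ofReal (Real.exp (γ * c2)) := by
                apply Finset.prod_le_prod'
                intro j hj
                have hne := Finset.ne_of_mem_erase hj
                simp only [if_neg hne]
                exact hgfaci j
            _ = (ENNReal.ofReal (Real.exp (γ * c2)))^(n-1) := by
                rw [Finset.prod_const, Finset.card_erase_of_mem hi, Finset.card_range]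
            _ ≤ (ENNReal.ofReal (Real.exp (γ * c2)))^n :=
                pow_le_pow_right' hone_le (Nat.sub_le n 1)
      -- numeric bound for the B part
      have hc3npos : (0:ℝ) < c3*(n:ℝ) := lt_of_lt_of_le one_pos h1c3
      have hTc3 : (n:ℝ)*c - c3*(n:ℝ) = c2*(n:ℝ) := by rw [← hc2c3]; ring
      have hchord : γ * (c2*(n:ℝ)) ≤ h ((n:ℝ)*c) - h (c3*(n:ℝ)) := by
        have hp := dfk_slope_pair hconcA (p := c3*(n:ℝ)) (q := (n:ℝ)*c)
          (p' := (n:ℝ)*c - 1) (q' := (n:ℝ)*c) hac3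
          (by linarith only [hTc3, hc2n])
          (by linarith only [hTc3, hc2n])
          le_rfl (by linarith only [])
        rw [show (n:ℝ)*c - ((n:ℝ)*c - 1) = 1 by ring, div_one, ← hγdef] at hp
        rw [le_div_iff₀ (by linarith only [hTc3, hc2n] : (0:ℝ) < (n:ℝ)*c - c3*(n:ℝ))] at hp
        calc γ * (c2*(n:ℝ)) = γ * ((n:ℝ)*c - c3*(n:ℝ)) := by rw [hTc3]
          _ ≤ h ((n:ℝ)*c) - h (c3*(n:ℝ)) := hp
      have hc3inv : Real.exp (-(h (c3*(n:ℝ)))) ≤ 1/(c3*(n:ℝ)) := by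
        have hl1 : Real.log (c3*(n:ℝ)) ≤ h (c3*(n:ℝ)) := hx₁ _ hx₁c3
        have h1 : Real.exp (-(h (c3*(n:ℝ)))) ≤ Real.exp (-(Real.log (c3*(n:ℝ)))) :=
          Real.exp_le_exp.2 (neg_le_neg hl1)
        have h2 : Real.exp (-(Real.log (c3*(n:ℝ)))) = 1/(c3*(n:ℝ)) := by
          rw [Real.exp_neg, Real.exp_log hc3npos, one_div]
        rw [h2] at h1
        exact h1
      have hExpq : Real.exp ((n:ℝ)*(γ*c2)) ≤ Real.exp (h ((n:ℝ)*c)) * (1/(c3*(n:ℝ))) := by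
        have e1 : Real.exp ((n:ℝ)*(γ*c2)) ≤ Real.exp (h ((n:ℝ)*c) - h (c3*(n:ℝ))) := by
          apply Real.exp_le_exp.2
          have hr : (n:ℝ)*(γ*c2) = γ * (c2*(n:ℝ)) := by ring
          linarith only [hchord, hr]
        have e2 : Real.exp (h ((n:ℝ)*c) - h (c3*(n:ℝ)))
            = Real.exp (h ((n:ℝ)*c)) * Real.exp (-(h (c3*(n:ℝ)))) := by
          rw [← Real.exp_add]; ring_nf
        rw [e2] at e1
        exact le_trans e1 (mul_le_mul_of_nonneg_left hc3inv (Real.exp_pos _).le)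
      have hnne : (n:ℝ) ≠ 0 := ne_of_gt (lt_of_lt_of_le zero_lt_one hn0R)
      have hnum : (n:ℝ≥0∞) * (ENNReal.ofReal (Real.exp D) * (ENNReal.ofReal Er
            * (ENNReal.ofReal (Real.exp (γ * c2)))^n))
          ≤ ENNReal.ofReal (Real.exp D * Er * Real.exp (h ((n:ℝ)*c)) / c3) := by
        rw [← ENNReal.ofReal_natCast n, ← ENNReal.ofReal_pow (Real.exp_pos _).le,
          ← Real.exp_nat_mul, ← ENNReal.ofReal_mul hEr0,
          ← ENNReal.ofReal_mul (Real.exp_pos D).le, ← ENNReal.ofReal_mul (Nat.cast_nonneg n)]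
        apply ENNReal.ofReal_le_ofReal
        calc (n:ℝ) * (Real.exp D * (Er * Real.exp ((n:ℝ)*(γ*c2))))
            ≤ (n:ℝ) * (Real.exp D * (Er * (Real.exp (h ((n:ℝ)*c)) * (1/(c3*(n:ℝ)))))) := by
              apply mul_le_mul_of_nonneg_left _ (Nat.cast_nonneg n)
              apply mul_le_mul_of_nonneg_left _ (Real.exp_pos D).le
              exact mul_le_mul_of_nonneg_left hExpq hEr0
          _ = Real.exp D * Er * Real.exp (h ((n:ℝ)*c)) / c3 := by
              field_simp
      have hPAmeas : Measurable (fun ω =>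
          ENNReal.ofReal (Real.exp (D + h ((n:ℝ)*c) - γ*((n:ℝ)*c)))
          * ∏ i ∈ Finset.range n, ENNReal.ofReal
              (if ξ i ω ≤ (n:ℝ)*c then Real.exp (γ * ξ i ω) else 0)) :=
        (Finset.measurable_prod _ (fun i _ => hGAmeasω i)).const_mul _
      have hPBmeas : ∀ i ∈ Finset.range n, Measurable (fun ω => ENNReal.ofReal (Real.exp D)
          * (ENNReal.ofReal (if (n:ℝ)*c < ξ i ω then Real.exp (h (ξ i ω)) else 0)
            * ∏ j ∈ (Finset.range n).erase i, ENNReal.ofReal (gstar (ξ j ω)))) := by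
        intro i _
        exact ((hGBmeasω i).mul
          (Finset.measurable_prod _ (fun j _ => hGSmeasω j))).const_mul _
      calc ∫⁻ ω, ENNReal.ofReal (Real.exp (h (∑ i ∈ Finset.range n, ξ i ω))) ∂μ
          ≤ ∫⁻ ω, (ENNReal.ofReal (Real.exp (D + h ((n:ℝ)*c) - γ*((n:ℝ)*c)))
              * ∏ i ∈ Finset.range n, ENNReal.ofReal
                  (if ξ i ω ≤ (n:ℝ)*c then Real.exp (γ * ξ i ω) else 0)
            + ∑ i ∈ Finset.range n, (ENNReal.ofReal (Real.exp D)
                * (ENNReal.ofReal (if (n:ℝ)*c < ξ i ω then Real.exp (h (ξ i ω)) else 0)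
                  * ∏ j ∈ (Finset.range n).erase i, ENNReal.ofReal (gstar (ξ j ω))))) ∂μ :=
            lintegral_mono hmaster
        _ = (∫⁻ ω, ENNReal.ofReal (Real.exp (D + h ((n:ℝ)*c) - γ*((n:ℝ)*c)))
              * ∏ i ∈ Finset.range n, ENNReal.ofReal
                  (if ξ i ω ≤ (n:ℝ)*c then Real.exp (γ * ξ i ω) else 0) ∂μ)
            + ∫⁻ ω, (∑ i ∈ Finset.range n, (ENNReal.ofReal (Real.exp D)
                * (ENNReal.ofReal (if (n:ℝ)*c < ξ i ω then Real.exp (h (ξ i ω)) else 0)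
                  * ∏ j ∈ (Finset.range n).erase i, ENNReal.ofReal (gstar (ξ j ω))))) ∂μ :=
            lintegral_add_left hPAmeas _
        _ = (∫⁻ ω, ENNReal.ofReal (Real.exp (D + h ((n:ℝ)*c) - γ*((n:ℝ)*c)))
              * ∏ i ∈ Finset.range n, ENNReal.ofReal
                  (if ξ i ω ≤ (n:ℝ)*c then Real.exp (γ * ξ i ω) else 0) ∂μ)
            + ∑ i ∈ Finset.range n, ∫⁻ ω, (ENNReal.ofReal (Real.exp D)
                * (ENNReal.ofReal (if (n:ℝ)*c < ξ i ω then Real.exp (h (ξ i ω)) else 0)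
                  * ∏ j ∈ (Finset.range n).erase i, ENNReal.ofReal (gstar (ξ j ω)))) ∂μ := by
            rw [lintegral_finset_sum _ hPBmeas]
        _ ≤ ENNReal.ofReal (Real.exp D * Real.exp (h ((n:ℝ)*c)))
            + ∑ _i ∈ Finset.range n, (ENNReal.ofReal (Real.exp D) * (ENNReal.ofReal Er
              * (ENNReal.ofReal (Real.exp (γ * c2)))^n)) :=
            add_le_add hPA (Finset.sum_le_sum hPBi)
        _ = ENNReal.ofReal (Real.exp D * Real.exp (h ((n:ℝ)*c)))
            + (n:ℝ≥0∞) * (ENNReal.ofReal (Real.exp D) * (ENNReal.ofReal Er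
              * (ENNReal.ofReal (Real.exp (γ * c2)))^n)) := by
            rw [Finset.sum_const, Finset.card_range, nsmul_eq_mul]
        _ ≤ ENNReal.ofReal (Real.exp D * Real.exp (h ((n:ℝ)*c)))
            + ENNReal.ofReal (Real.exp D * Er * Real.exp (h ((n:ℝ)*c)) / c3) :=
            add_le_add_right hnum _
        _ = ENNReal.ofReal (Real.exp D * Real.exp (h ((n:ℝ)*c))
            + Real.exp D * Er * Real.exp (h ((n:ℝ)*c)) / c3) :=
            (ENNReal.ofReal_add (by positivity)
              (div_nonneg (by positivity) hc30.le)).symm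
        _ ≤ ENNReal.ofReal (K * Real.exp (h ((n:ℝ) * c))) := by
            apply ENNReal.ofReal_le_ofReal
            have hcoef : Real.exp D * (1 + Er / c3) ≤ K := by
              rw [hKdef]
              linarith only [hKsmall0, (Real.exp_pos D).le]
            have hsplit2 : Real.exp D * Real.exp (h ((n:ℝ)*c))
                + Real.exp D * Er * Real.exp (h ((n:ℝ)*c)) / c3
                = (Real.exp D * (1 + Er / c3)) * Real.exp (h ((n:ℝ)*c)) := by
              field_simp
            rw [hsplit2]
            exact mul_le_mul_of_nonneg_right hcoef (Real.exp_pos _).le
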